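/- Let p, θ ∈ ℝ³ with ‖θ‖ < 4π, and set g = exp((1/2)(p·σ)) · exp(−(i/2)(θ·σ)), a 2×2 complex matrix. Let s ∈ ℝ and φ ∈ [0, π] satisfy 2·cosh(s + iφ) = tr(g). Then ‖p‖²/4 − s² + φ² ≥ 0, and equality holds if and only if exp(−(i/2)(θ·σ)) is the identity matrix (equivalently, θ = 0). -/

import Mathlib

open Matrix

/-- For `v ∈ ℝ³`, the matrix `v·σ = v₁σ₁ + v₂σ₂ + v₃σ₃` built from the Pauli matrices. -/
noncomputable def pauliDot (v : EuclideanSpace ℝ (Fin 3)) : Matrix (Fin 2) (Fin 2) ℂ :=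
  (v 0 : ℂ) • !![0, 1; 1, 0] +
  (v 1 : ℂ) • !![0, -Complex.I; Complex.I, 0] +
  (v 2 : ℂ) • !![1, 0; 0, -1]

namespace Statement1Aux

open NormedSpace Complex
open scoped Nat

noncomputable def sa (r : ℝ) : ℝ := ∑' n : ℕ, r ^ n / ((2 * n + 1)! : ℝ)

lemma summable_aux (r : ℝ) (m : ℕ → ℕ) (hm : ∀ n, n ≤ m n) :
    Summable fun n : ℕ => r ^ n / ((m n)! : ℝ) := by
  apply Summable.of_norm
  refine Summable.of_nonneg_of_le (fun n => norm_nonneg _) (fun n => ?_)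
    (Real.summable_pow_div_factorial |r|)
  rw [Real.norm_eq_abs, abs_div, _root_.abs_pow, Nat.abs_cast]
  apply div_le_div_of_nonneg_left (by positivity) (by positivity)
  exact_mod_cast Nat.factorial_le (hm n)

lemma hasSum_sa (r : ℝ) : HasSum (fun n : ℕ => r ^ n / ((2 * n + 1)! : ℝ)) (sa r) :=
  (summable_aux r _ (fun n => by omega)).hasSum

lemma hasSum_sa_c (r : ℝ) :
    HasSum (fun n : ℕ => ((r : ℂ)) ^ n / ((2 * n + 1)! : ℂ)) ((sa r : ℝ) : ℂ) := by
  have := (hasSum_sa r).mapL Complex.ofRealCLM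
  convert this using 2 with n
  all_goals simp

lemma hasSum_cosh' (z : ℂ) :
    HasSum (fun n : ℕ => (z ^ 2) ^ n / ((2 * n)! : ℂ)) (Complex.cosh z) := by
  have h := Complex.hasSum_cos' (z * (-I))
  have hzi : z * (-I) * I = z := by
    simp [mul_assoc, Complex.I_mul_I]
  rw [hzi] at h
  have hc : Complex.cos (z * (-I)) = Complex.cosh z := by
    have := Complex.cosh_mul_I (x := z * (-I))
    rw [hzi] at this
    rw [← this]
  rw [hc] at h
  convert h using 2 with n
  rw [← pow_mul]

lemma hasSum_sinh' (z : ℂ) :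
    HasSum (fun n : ℕ => z * ((z ^ 2) ^ n / ((2 * n + 1)! : ℂ))) (Complex.sinh z) := by
  have h := Complex.hasSum_sin' (z * (-I))
  have hzi : z * (-I) * I = z := by
    simp [mul_assoc, Complex.I_mul_I]
  rw [hzi] at h
  have h2 := h.mul_right I
  have hv : Complex.sin (z * -I) * I = Complex.sinh z := by
    have := Complex.sinh_mul_I (x := z * (-I))
    rw [hzi] at this
    exact this.symm
  rw [hv] at h2
  convert h2 using 1
  · rfl
  funext n
  rw [show z ^ (2 * n + 1) = (z ^ 2) ^ n * z from by rw [pow_succ, pow_mul]]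
  have hc : ((2 * n + 1)! : ℂ) ≠ 0 := by exact_mod_cast Nat.factorial_ne_zero _
  field_simp

lemma mul_sa (z : ℂ) (r : ℝ) (h : z ^ 2 = (r : ℂ)) :
    z * ((sa r : ℝ) : ℂ) = Complex.sinh z := by
  have h1 := (hasSum_sa_c r).mul_left z
  rw [← h] at h1
  exact h1.unique (hasSum_sinh' z)

lemma sa_nonneg (r : ℝ) (hr : 0 ≤ r) : 0 ≤ sa r :=
  tsum_nonneg fun n => by positivity

lemma cosh_sub_cosh_eq (x y : ℝ) : Real.cosh x - Real.cosh y =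
    2 * Real.sinh ((x + y) / 2) * Real.sinh ((x - y) / 2) := by
  have hx : x = (x + y) / 2 + (x - y) / 2 := by ring
  have hy : y = (x + y) / 2 - (x - y) / 2 := by ring
  rw [hx, hy, Real.cosh_add, Real.cosh_sub]
  ring_nf

lemma cosh_sq_strict {a t : ℝ} (ha : 0 ≤ a) (hat : a < t) :
    t ^ 2 - a ^ 2 < Real.cosh t ^ 2 - Real.cosh a ^ 2 := by
  have hd := cosh_sub_cosh_eq t a
  have h1 : (t - a) / 2 ≤ Real.sinh ((t - a) / 2) := Real.self_le_sinh_iff.2 (by linarith)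
  have h2 : (t + a) / 2 ≤ Real.sinh ((t + a) / 2) := Real.self_le_sinh_iff.2 (by linarith)
  have h3 : 1 < Real.cosh t := by
    have := Real.one_lt_cosh (x := t)
    rw [this]
    intro h0
    rw [h0] at hat
    exact absurd hat (not_lt.2 ha)
  have h4 : 1 ≤ Real.cosh a := Real.one_le_cosh a
  have hq : (0 : ℝ) < (t + a) / 2 * ((t - a) / 2) :=
    mul_pos (by linarith) (by linarith)
  have hs : (t + a) / 2 * ((t - a) / 2) ≤
      Real.sinh ((t + a) / 2) * Real.sinh ((t - a) / 2) :=
    mul_le_mul h2 h1 (by linarith) (by linarith)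
  have hC : (2 : ℝ) < Real.cosh t + Real.cosh a := by linarith
  nlinarith [hd, hq, hs, hC,
    mul_le_mul_of_nonneg_right hs (show (0:ℝ) ≤ Real.cosh t + Real.cosh a by linarith),
    mul_lt_mul_of_pos_left hC hq]

lemma cosh_eq_imp_sq_eq {x y : ℝ} (h : Real.cosh x = Real.cosh y) : x ^ 2 = y ^ 2 := by
  have hd := cosh_sub_cosh_eq x y
  rw [h, sub_self] at hd
  rcases mul_eq_zero.1 hd.symm with h1 | h1
  · rcases mul_eq_zero.1 h1 with h2 | h2
    · norm_num at h2
    · have h3 : (x + y) / 2 = 0 := Real.sinh_eq_zero.1 h2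
      have h4 : x = -y := by linarith
      rw [h4]; ring
  · have h3 : (x - y) / 2 = 0 := Real.sinh_eq_zero.1 h1
    have h4 : x = y := by linarith
    rw [h4]

lemma core {a s f : ℝ} (ha : 0 ≤ a) (hφ : 0 ≤ f)
    (hkey : Real.cosh s ^ 2 ≤ Real.cosh a ^ 2 + Real.sin f ^ 2) :
    s ^ 2 ≤ a ^ 2 + f ^ 2 ∧ (s ^ 2 = a ^ 2 + f ^ 2 → f = 0 ∧ s ^ 2 = a ^ 2) := by
  rcases le_or_gt (s ^ 2) (a ^ 2) with h1 | h1
  · constructor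
    · nlinarith [sq_nonneg f]
    · intro he
      have hφ0 : f = 0 := by nlinarith
      exact ⟨hφ0, by rw [hφ0] at he; linarith [he]⟩
  · have habs : a < |s| := by
      by_contra hc
      push_neg at hc
      nlinarith [abs_nonneg s, _root_.sq_abs s]
    have hst := cosh_sq_strict ha habs
    rw [Real.cosh_abs, _root_.sq_abs] at hst
    have hsin : Real.sin f ^ 2 ≤ f ^ 2 := Real.sin_sq_le_sq
    constructor
    · linarith
    · intro he
      exfalso
      linarith

lemma pauliDot_eq (v : EuclideanSpace ℝ (Fin 3)) :
    pauliDot v = !![(v 2 : ℂ), (v 0 : ℂ) - (v 1 : ℂ) * I;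
      (v 0 : ℂ) + (v 1 : ℂ) * I, -(v 2 : ℂ)] := by
  ext i j
  fin_cases i <;> fin_cases j <;>
    simp [pauliDot] <;> ring

lemma norm_sq_eq (v : EuclideanSpace ℝ (Fin 3)) :
    ‖v‖ ^ 2 = v 0 ^ 2 + v 1 ^ 2 + v 2 ^ 2 := by
  rw [EuclideanSpace.norm_eq, Real.sq_sqrt (by positivity)]
  simp [Fin.sum_univ_three, Real.norm_eq_abs, sq_abs]

lemma pauliDot_sq (v : EuclideanSpace ℝ (Fin 3)) :
    pauliDot v * pauliDot v = ((‖v‖ : ℂ) ^ 2) • 1 := by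
  rw [pauliDot_eq]
  have h : ((‖v‖ : ℂ) ^ 2) = ((v 0 : ℂ) ^ 2 + (v 1 : ℂ) ^ 2 + (v 2 : ℂ) ^ 2) := by
    rw [← Complex.ofReal_pow, norm_sq_eq]
    push_cast
    ring
  rw [h]
  ext i j
  fin_cases i <;> fin_cases j <;>
    simp [Matrix.mul_apply, Fin.sum_univ_two, Matrix.one_apply] <;> ring_nf <;>
    rw [show (I:ℂ)^2 = -1 from Complex.I_sq] <;> ring

lemma pauliDot_trace (v : EuclideanSpace ℝ (Fin 3)) : (pauliDot v).trace = 0 := by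
  rw [pauliDot_eq, Matrix.trace_fin_two_of]
  ring

lemma pauliDot_mul_trace (v w : EuclideanSpace ℝ (Fin 3)) :
    (pauliDot v * pauliDot w).trace =
      2 * ((v 0 * w 0 + v 1 * w 1 + v 2 * w 2 : ℝ) : ℂ) := by
  rw [pauliDot_eq, pauliDot_eq]
  rw [show (!![(v 2 : ℂ), (v 0 : ℂ) - (v 1 : ℂ) * I; (v 0 : ℂ) + (v 1 : ℂ) * I, -(v 2 : ℂ)] *
      !![(w 2 : ℂ), (w 0 : ℂ) - (w 1 : ℂ) * I; (w 0 : ℂ) + (w 1 : ℂ) * I, -(w 2 : ℂ)]) =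
      _ from Matrix.mul_fin_two _ _ _ _ _ _ _ _, Matrix.trace_fin_two_of]
  push_cast
  ring_nf
  rw [Complex.I_sq]
  ring

lemma pow_even_of_sq {X : Matrix (Fin 2) (Fin 2) ℂ} {w : ℂ} (h : X * X = w • 1) (n : ℕ) :
    X ^ (2 * n) = (w ^ n) • (1 : Matrix (Fin 2) (Fin 2) ℂ) := by
  induction n with
  | zero => simp
  | succ n ih =>
    rw [show 2 * (n + 1) = 2 * n + 2 by ring, pow_add, ih, pow_two, h]
    rw [smul_mul_assoc, Matrix.mul_smul, one_mul, smul_smul]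
    rw [pow_succ, mul_comm]

lemma pow_odd_of_sq {X : Matrix (Fin 2) (Fin 2) ℂ} {w : ℂ} (h : X * X = w • 1) (n : ℕ) :
    X ^ (2 * n + 1) = (w ^ n) • X := by
  rw [pow_succ, pow_even_of_sq h, smul_mul_assoc, one_mul]

set_option maxHeartbeats 1000000 in
lemma exp_of_sq {X : Matrix (Fin 2) (Fin 2) ℂ} {z : ℂ} (h : X * X = (z ^ 2) • 1) :
    NormedSpace.exp X = Complex.cosh z • (1 : Matrix (Fin 2) (Fin 2) ℂ) +
      (∑' n : ℕ, (z ^ 2) ^ n / ((2 * n + 1)! : ℂ)) • X := by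
  have hsummable : Summable fun n : ℕ => (z ^ 2) ^ n / ((2 * n + 1)! : ℂ) := by
    apply Summable.of_norm
    refine Summable.of_nonneg_of_le (fun n => norm_nonneg _) (fun n => ?_)
      (Real.summable_pow_div_factorial ‖z ^ 2‖)
    rw [norm_div, norm_pow]
    apply div_le_div_of_nonneg_left (by positivity) (by positivity)
    rw [Complex.norm_natCast]
    exact_mod_cast Nat.factorial_le (by omega : n ≤ 2 * n + 1)
  have he : HasSum (fun k : ℕ => (((2 * k)! : ℂ))⁻¹ • X ^ (2 * k))
      (Complex.cosh z • (1 : Matrix (Fin 2) (Fin 2) ℂ)) := by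
    have h1 := (hasSum_cosh' z).smul_const (1 : Matrix (Fin 2) (Fin 2) ℂ)
    have hfun : (fun k : ℕ => (((2 * k)! : ℂ))⁻¹ • X ^ (2 * k)) =
        fun k => ((z ^ 2) ^ k / ((2 * k)! : ℂ)) • (1 : Matrix (Fin 2) (Fin 2) ℂ) := by
      funext k
      rw [pow_even_of_sq h, smul_smul, div_eq_inv_mul]
    rw [hfun]
    exact h1
  have ho : HasSum (fun k : ℕ => (((2 * k + 1)! : ℂ))⁻¹ • X ^ (2 * k + 1))
      ((∑' n : ℕ, (z ^ 2) ^ n / ((2 * n + 1)! : ℂ)) • X) := by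
    have h1 := hsummable.hasSum.smul_const X
    have hfun : (fun k : ℕ => (((2 * k + 1)! : ℂ))⁻¹ • X ^ (2 * k + 1)) =
        fun k => ((z ^ 2) ^ k / ((2 * k + 1)! : ℂ)) • X := by
      funext k
      rw [pow_odd_of_sq h, smul_smul, div_eq_inv_mul]
    rw [hfun]
    exact h1
  rw [exp_eq_tsum ℂ]
  exact (he.even_add_odd ho).tsum_eq

lemma trace_comb (A B : Matrix (Fin 2) (Fin 2) ℂ) (α β γ δ : ℂ)
    (hA : A.trace = 0) (hB : B.trace = 0) :
    ((α • 1 + β • A) * (γ • 1 + δ • B)).trace = 2 * (α * γ) + (β * δ) * (A * B).trace := by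
  simp [mul_add, add_mul, Matrix.smul_mul, Matrix.mul_smul, Matrix.trace_add, Matrix.trace_smul,
    hA, hB, smul_smul, smul_eq_mul, Matrix.trace_one]
  ring

lemma cosh_cos_identity (x y : ℝ) :
    Real.cosh x ^ 2 - Real.sin y ^ 2 =
      (Real.cosh x * Real.cos y) ^ 2 + (Real.sinh x * Real.sin y) ^ 2 := by
  have c1 := Real.sin_sq_add_cos_sq y
  have c2 := Real.cosh_sq x
  linear_combination (-(Real.cosh x ^ 2)) * c1 + (Real.sin y ^ 2) * c2

end Statement1Aux

set_option maxHeartbeats 1000000 in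
/-- Let `p, θ ∈ ℝ³` with `‖θ‖ < 4π` and set
`g = exp((1/2)(p·σ)) * exp(−(i/2)(θ·σ))`.  If `s ∈ ℝ`, `φ ∈ [0, π]` satisfy
`2 cosh(s + iφ) = tr g`, then `‖p‖²/4 − s² + φ² ≥ 0`, with equality iff
`exp(−(i/2)(θ·σ))` is the identity matrix. -/
theorem statement1 (p θ : EuclideanSpace ℝ (Fin 3)) (hθ : ‖θ‖ < 4 * Real.pi)
    (s φ : ℝ) (hφ : φ ∈ Set.Icc 0 Real.pi)
    (h : 2 * Complex.cosh ((s : ℂ) + (φ : ℂ) * Complex.I) =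
      (NormedSpace.exp ((1/2 : ℂ) • pauliDot p) *
        NormedSpace.exp (-(Complex.I/2) • pauliDot θ)).trace) :
    0 ≤ ‖p‖^2 / 4 - s^2 + φ^2 ∧
      (‖p‖^2 / 4 - s^2 + φ^2 = 0 ↔
        NormedSpace.exp (-(Complex.I/2) • pauliDot θ) = 1) := by
  obtain ⟨hφ0, hφπ⟩ := hφ
  have hπ := Real.pi_pos
  set a : ℝ := ‖p‖ / 2 with ha_def
  set b : ℝ := ‖θ‖ / 2 with hb_def
  have ha0 : 0 ≤ a := by positivity
  have hb0 : 0 ≤ b := by positivity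
  have hb2 : b < 2 * Real.pi := by rw [hb_def]; linarith
  have hsq1 : ((1/2 : ℂ) • pauliDot p) * ((1/2 : ℂ) • pauliDot p)
      = (((a : ℝ) : ℂ) ^ 2) • (1 : Matrix (Fin 2) (Fin 2) ℂ) := by
    rw [Matrix.smul_mul, Matrix.mul_smul, Statement1Aux.pauliDot_sq, smul_smul, smul_smul]
    congr 1
    rw [ha_def]; push_cast; ring
  have hsq2 : (-(Complex.I/2) • pauliDot θ) * (-(Complex.I/2) • pauliDot θ)
      = ((((b : ℝ) : ℂ) * Complex.I) ^ 2) • (1 : Matrix (Fin 2) (Fin 2) ℂ) := by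
    rw [Matrix.smul_mul, Matrix.mul_smul, Statement1Aux.pauliDot_sq, smul_smul, smul_smul]
    congr 1
    rw [hb_def]; push_cast; ring
  set u₁ : ℝ := Statement1Aux.sa (a ^ 2) with hu₁_def
  set u₂ : ℝ := Statement1Aux.sa (-(b ^ 2)) with hu₂_def
  have hz1 : (((a : ℝ) : ℂ)) ^ 2 = ((a ^ 2 : ℝ) : ℂ) := by push_cast; ring
  have hz2 : ((((b : ℝ) : ℂ)) * Complex.I) ^ 2 = ((-(b ^ 2) : ℝ) : ℂ) := by
    rw [mul_pow, Complex.I_sq]; push_cast; ring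
  have hexp1 : NormedSpace.exp ((1/2 : ℂ) • pauliDot p)
      = ((Real.cosh a : ℝ) : ℂ) • (1 : Matrix (Fin 2) (Fin 2) ℂ)
        + ((u₁ : ℝ) : ℂ) • ((1/2 : ℂ) • pauliDot p) := by
    rw [Statement1Aux.exp_of_sq hsq1]
    congr 1
    · rw [Complex.ofReal_cosh]
    · congr 1
      rw [hz1, hu₁_def]
      exact (Statement1Aux.hasSum_sa_c _).tsum_eq
  have hexp2 : NormedSpace.exp (-(Complex.I/2) • pauliDot θ)
      = ((Real.cos b : ℝ) : ℂ) • (1 : Matrix (Fin 2) (Fin 2) ℂ)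
        + ((u₂ : ℝ) : ℂ) • (-(Complex.I/2) • pauliDot θ) := by
    rw [Statement1Aux.exp_of_sq hsq2]
    congr 1
    · rw [Complex.cosh_mul_I, Complex.ofReal_cos]
    · congr 1
      rw [hz2, hu₂_def]
      exact (Statement1Aux.hasSum_sa_c _).tsum_eq
  set d : ℝ := p 0 * θ 0 + p 1 * θ 1 + p 2 * θ 2 with hd_def
  clear_value a b u₁ u₂ d
  have htr1 : ((1/2 : ℂ) • pauliDot p).trace = 0 := by
    rw [Matrix.trace_smul, Statement1Aux.pauliDot_trace, smul_zero]
  have htr2 : (-(Complex.I/2) • pauliDot θ).trace = 0 := by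
    rw [Matrix.trace_smul, Statement1Aux.pauliDot_trace, smul_zero]
  have htrX : (((1/2 : ℂ) • pauliDot p) * (-(Complex.I/2) • pauliDot θ)).trace
      = -(Complex.I/2) * ((d : ℝ) : ℂ) := by
    rw [Matrix.smul_mul, Matrix.mul_smul, smul_smul, Matrix.trace_smul,
      Statement1Aux.pauliDot_mul_trace, smul_eq_mul, hd_def]
    push_cast
    ring
  have hmain : 2 * Complex.cosh ((s : ℂ) + (φ : ℂ) * Complex.I)
      = 2 * (((Real.cosh a : ℝ) : ℂ) * ((Real.cos b : ℝ) : ℂ))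
        + ((u₁ : ℝ) : ℂ) * ((u₂ : ℝ) : ℂ) * (-(Complex.I/2) * ((d : ℝ) : ℂ)) := by
    rw [h, hexp1, hexp2, Statement1Aux.trace_comb _ _ _ _ _ _ htr1 htr2, htrX]
  rw [Complex.cosh_add, Complex.cosh_mul_I, Complex.sinh_mul_I] at hmain
  simp only [← Complex.ofReal_cosh, ← Complex.ofReal_sinh, ← Complex.ofReal_cos,
    ← Complex.ofReal_sin] at hmain
  have hre := congrArg Complex.re hmain
  have him := congrArg Complex.im hmain
  simp [Complex.cos_ofReal_re, Complex.sin_ofReal_re, Complex.sinh_ofReal_re,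
    Complex.cosh_ofReal_re] at hre him
  have E1 : Real.cosh s * Real.cos φ = Real.cosh a * Real.cos b := by linarith only [hre]
  have E2 : Real.sinh s * Real.sin φ = -(1/4) * d * u₁ * u₂ := by linarith only [him]
  have hau : a * u₁ = Real.sinh a := by
    have h1 := Statement1Aux.mul_sa ((a : ℝ) : ℂ) (a ^ 2) hz1
    rw [← Complex.ofReal_sinh, ← hu₁_def] at h1
    exact_mod_cast h1
  have hbu : b * u₂ = Real.sin b := by
    have h2 := Statement1Aux.mul_sa (((b : ℝ) : ℂ) * Complex.I) (-(b ^ 2)) hz2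
    rw [Complex.sinh_mul_I, ← hu₂_def] at h2
    have h3 : ((b * u₂ : ℝ) : ℂ) = ((Real.sin b : ℝ) : ℂ) := by
      apply mul_right_cancel₀ Complex.I_ne_zero
      push_cast
      linear_combination h2
    exact_mod_cast h3
  have hu₁0 : 0 ≤ u₁ := by
    rw [hu₁_def]
    exact Statement1Aux.sa_nonneg _ (by positivity)
  have hcs : |d| ≤ 2 * a * (2 * b) := by
    have hinner : (inner ℝ p θ : ℝ) = d := by
      simp [hd_def, PiLp.inner_apply, Fin.sum_univ_three]
      ring
    have hle := abs_real_inner_le_norm p θ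
    rw [hinner] at hle
    calc |d| ≤ ‖p‖ * ‖θ‖ := hle
      _ = 2 * a * (2 * b) := by rw [ha_def, hb_def]; ring
  have hd2 : d ^ 2 ≤ (2 * a * (2 * b)) ^ 2 := by
    rw [← _root_.sq_abs d]
    exact pow_le_pow_left₀ (abs_nonneg d) hcs 2
  have E1sq : (Real.cosh s * Real.cos φ) ^ 2 = (Real.cosh a * Real.cos b) ^ 2 := by rw [E1]
  have E2sq : (Real.sinh s * Real.sin φ) ^ 2 ≤ (Real.sinh a * Real.sin b) ^ 2 := by
    rw [E2, ← hau, ← hbu]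
    nlinarith only [mul_le_mul_of_nonneg_right hd2 (sq_nonneg (u₁ * u₂)), sq_nonneg (u₁ * u₂), hd2]
  have hkey : Real.cosh s ^ 2 ≤ Real.cosh a ^ 2 + Real.sin φ ^ 2 := by
    have i1 := Statement1Aux.cosh_cos_identity s φ
    have i2 := Statement1Aux.cosh_cos_identity a b
    linarith only [i1, i2, E1sq, E2sq, sq_nonneg (Real.sin b)]
  have hcore := Statement1Aux.core ha0 hφ0 hkey
  have hap : a ^ 2 = ‖p‖ ^ 2 / 4 := by rw [ha_def]; ring
  refine ⟨by linarith only [hcore.1, hap], ?_, ?_⟩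
  · -- equality → exp = 1
    intro heq
    have hs2 : s ^ 2 = a ^ 2 + φ ^ 2 := by linarith only [heq, hap]
    obtain ⟨hφ00, hsa⟩ := hcore.2 hs2
    have hcosh : Real.cosh s = Real.cosh a := by
      rw [← Real.cosh_abs s, ← Real.cosh_abs a]
      congr 1
      rw [← Real.sqrt_sq_eq_abs, ← Real.sqrt_sq_eq_abs, hsa]
    have hcosb : Real.cos b = 1 := by
      have hE := E1
      rw [hφ00, Real.cos_zero, mul_one, hcosh] at hE
      have hpos := Real.cosh_pos a
      have hc := mul_left_cancel₀ (ne_of_gt hpos)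
        (show Real.cosh a * 1 = Real.cosh a * Real.cos b by rw [mul_one]; exact hE)
      exact hc.symm
    have hb0' : b = 0 := (Real.cos_eq_one_iff_of_lt_of_lt (by linarith) hb2).1 hcosb
    have hθ0 : θ = 0 := by
      have hn : ‖θ‖ = 0 := by rw [hb_def] at hb0'; linarith only [hb0']
      exact norm_eq_zero.1 hn
    rw [hθ0]
    have hp0 : pauliDot 0 = 0 := by
      ext i j
      fin_cases i <;> fin_cases j <;> simp [pauliDot]
    rw [hp0, smul_zero, NormedSpace.exp_zero]
  · -- exp = 1 → equality
    intro hone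
    rw [hone, mul_one] at h
    have htr : (NormedSpace.exp ((1/2 : ℂ) • pauliDot p)).trace
        = 2 * ((Real.cosh a : ℝ) : ℂ) := by
      rw [hexp1, Matrix.trace_add, Matrix.trace_smul, Matrix.trace_smul, Matrix.trace_one, htr1]
      simp
      ring
    rw [htr] at h
    rw [Complex.cosh_add, Complex.cosh_mul_I, Complex.sinh_mul_I] at h
    simp only [← Complex.ofReal_cosh, ← Complex.ofReal_sinh, ← Complex.ofReal_cos,
      ← Complex.ofReal_sin] at h
    have hre2 := congrArg Complex.re h
    have him2 := congrArg Complex.im h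
    simp [Complex.cos_ofReal_re, Complex.sin_ofReal_re, Complex.sinh_ofReal_re,
      Complex.cosh_ofReal_re] at hre2 him2
    have F1 : Real.cosh s * Real.cos φ = Real.cosh a := by linarith only [hre2]
    rcases him2 with hs00 | hsφ0
    · rw [hs00, Real.cosh_zero, one_mul] at F1
      have h1 : Real.cos φ ≤ 1 := Real.cos_le_one φ
      have h2 : 1 ≤ Real.cosh a := Real.one_le_cosh a
      have hcosφ : Real.cos φ = 1 := by linarith only [h1, h2, F1]
      have hcosha : Real.cosh a = 1 := by linarith only [h1, h2, F1]
      have hφ00 : φ = 0 := (Real.cos_eq_one_iff_of_lt_of_lt (by linarith) (by linarith)).1 hcosφ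
      have ha2 : a ^ 2 = 0 := by
        have := Statement1Aux.cosh_eq_imp_sq_eq (x := a) (y := 0)
          (by rw [Real.cosh_zero]; exact hcosha)
        simpa using this
      rw [hs00, hφ00]
      linarith only [ha2, hap]
    · by_cases hφπ' : φ = Real.pi
      · exfalso
        rw [hφπ', Real.cos_pi] at F1
        linarith only [F1, Real.cosh_pos s, Real.cosh_pos a]
      · have hφ00 : φ = 0 := by
          have hlt : φ < Real.pi := lt_of_le_of_ne hφπ hφπ'
          exact (Real.sin_eq_zero_iff_of_lt_of_lt (by linarith) hlt).1 hsφ0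
        rw [hφ00, Real.cos_zero, mul_one] at F1
        have hsa := Statement1Aux.cosh_eq_imp_sq_eq F1
        rw [hφ00]
        linarith only [hsa, hap]
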